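/- Let n ≥ 1 and m ≥ 1 be integers. Then for every a > 0 and every x ∈ ℝⁿ, the polyharmonic heat kernel satisfies the polyharmonic heat equation in the variable a: the derivative of a ↦ E_{m,a}(x) at a equals −((−Δ)^m E_{m,a})(x), i.e., ∂_a E_{m,a}(x) + (−1)^m (Δ^[m] E_{m,a})(x) = 0. -/

import Mathlib

open MeasureTheory Real Complex
open Filter Asymptotics Topology

noncomputable def heatKernel (n m : ℕ) (a : ℝ) (x : EuclideanSpace ℝ (Fin n)) : ℂ :=
  ((2 * Real.pi) ^ n : ℝ)⁻¹ •
    ∫ s : EuclideanSpace ℝ (Fin n),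
      Complex.exp (Complex.I * ((inner ℝ x s : ℝ) : ℂ) - (a : ℂ) * ((‖s‖ : ℝ) : ℂ) ^ (2 * m))

noncomputable def euclLaplacian {n : ℕ} {F : Type*} [NormedAddCommGroup F] [NormedSpace ℝ F]
    (f : EuclideanSpace ℝ (Fin n) → F) : EuclideanSpace ℝ (Fin n) → F :=
  fun x => ∑ i : Fin n,
    fderiv ℝ (fun y => fderiv ℝ f y (EuclideanSpace.single i 1)) x (EuclideanSpace.single i 1)


noncomputable def pker (n m : ℕ) (a : ℝ) (x s : EuclideanSpace ℝ (Fin n)) : ℂ :=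
  Complex.exp (Complex.I * ((inner ℝ x s : ℝ) : ℂ) - (a : ℝ) * ((‖s‖ : ℝ) : ℂ) ^ (2 * m))

lemma norm_pker (n m : ℕ) (a : ℝ) (x s : EuclideanSpace ℝ (Fin n)) :
    ‖pker n m a x s‖ = rexp (-(a * ‖s‖ ^ (2 * m))) := by
  rw [pker, Complex.norm_exp]
  congr 1
  simp [Complex.sub_re, Complex.mul_re, ← Complex.ofReal_pow]

lemma bound_exists {m : ℕ} (hm : 1 ≤ m) {a : ℝ} (ha : 0 < a) (K : ℕ) :
    ∃ C : ℝ, ∀ t : ℝ, 0 ≤ t → (1 + t) ^ K * rexp (-(a * t ^ (2 * m))) ≤ C := by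
  have hp : (1:ℝ) < ((2*m : ℕ) : ℝ) := by
    have h2 : (2:ℕ) ≤ 2*m := by omega
    calc (1:ℝ) < 2 := one_lt_two
      _ ≤ ((2*m : ℕ) : ℝ) := by exact_mod_cast h2
  have h := (rpow_mul_exp_neg_mul_rpow_isLittleO_exp_neg (K:ℝ) hp ha).isBigO
  have hg : Tendsto (fun x : ℝ => rexp (-(1/2) * x)) atTop (𝓝 0) := by
    apply Real.tendsto_exp_atBot.comp
    exact Tendsto.const_mul_atTop_of_neg (by norm_num) tendsto_id
  have h0 : Tendsto (fun x : ℝ => x ^ (K:ℝ) * rexp (-a * x ^ ((2*m : ℕ):ℝ))) atTop (𝓝 0) :=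
    h.trans_tendsto hg
  obtain ⟨T, hT⟩ := eventually_atTop.mp (h0.eventually (eventually_le_nhds one_pos))
  set M := max T 1 with hM
  have hM1 : (1:ℝ) ≤ M := le_max_right T 1
  have hcont : ContinuousOn (fun t : ℝ => (1 + t) ^ K * rexp (-(a * t ^ (2 * m))))
      (Set.Icc 0 M) := by fun_prop
  obtain ⟨t₀, _, ht₀⟩ := (isCompact_Icc (a := (0:ℝ)) (b := M)).exists_isMaxOn
    ⟨0, Set.left_mem_Icc.2 (by linarith)⟩ hcont
  refine ⟨max ((1 + t₀) ^ K * rexp (-(a * t₀ ^ (2 * m)))) (2^K), fun t ht => ?_⟩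
  rcases le_or_gt t M with h1 | h1
  · exact le_max_of_le_left (ht₀ ⟨ht, h1⟩)
  · have ht1 : 1 ≤ t := le_trans hM1 h1.le
    have key := hT t (le_trans (le_max_left T 1) h1.le)
    rw [Real.rpow_natCast, Real.rpow_natCast] at key
    have h2 : (1 + t) ^ K ≤ (2*t) ^ K := pow_le_pow_left₀ (by linarith) (by linarith) K
    refine le_max_of_le_right ?_
    calc (1 + t)^K * rexp (-(a * t ^ (2*m)))
        ≤ (2*t)^K * rexp (-(a * t^(2*m))) :=
          mul_le_mul_of_nonneg_right h2 (exp_nonneg _)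
      _ = 2^K * (t^K * rexp (-a * t^(2*m))) := by rw [mul_pow, neg_mul]; ring
      _ ≤ 2^K * 1 := mul_le_mul_of_nonneg_left key (by positivity)
      _ = 2^K := mul_one _

lemma integrable_weight (n : ℕ) {m : ℕ} (hm : 1 ≤ m) {a : ℝ} (ha : 0 < a) (K : ℕ) :
    Integrable (fun s : EuclideanSpace ℝ (Fin n) =>
      (1 + ‖s‖) ^ K * rexp (-(a * ‖s‖ ^ (2 * m)))) := by
  obtain ⟨C, hC⟩ := bound_exists hm ha (K + (n+1))
  have hfr : ((Module.finrank ℝ (EuclideanSpace ℝ (Fin n)) : ℝ)) < (n:ℝ)+1 := by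
    rw [finrank_euclideanSpace_fin]; linarith
  have hint := (integrable_one_add_norm (E := EuclideanSpace ℝ (Fin n))
    (μ := volume) hfr).const_mul C
  refine hint.mono' ((by fun_prop : Continuous fun s : EuclideanSpace ℝ (Fin n) =>
      (1 + ‖s‖) ^ K * rexp (-(a * ‖s‖ ^ (2 * m)))).aestronglyMeasurable)
    (ae_of_all _ fun s => ?_)
  have hpos : (0:ℝ) < 1 + ‖s‖ := by positivity
  have hrw : (1+‖s‖) ^ (-((n:ℝ)+1)) = ((1+‖s‖)^((n+1 : ℕ)))⁻¹ := by
    rw [← Real.rpow_natCast (1+‖s‖) (n+1), ← Real.rpow_neg hpos.le]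
    norm_num
  rw [Real.norm_of_nonneg (by positivity), hrw, ← div_eq_mul_inv,
    le_div_iff₀ (by positivity)]
  have h := hC ‖s‖ (norm_nonneg s)
  rw [pow_add] at h
  calc (1 + ‖s‖)^K * rexp (-(a * ‖s‖^(2*m))) * (1+‖s‖)^(n+1)
      = (1 + ‖s‖)^K * (1+‖s‖)^(n+1) * rexp (-(a * ‖s‖^(2*m))) := by ring
    _ ≤ C := h

lemma continuous_pker (n m : ℕ) (a : ℝ) (x : EuclideanSpace ℝ (Fin n)) :
    Continuous (fun s => pker n m a x s) := by
  unfold pker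
  apply Continuous.cexp
  apply Continuous.sub
  · exact continuous_const.mul (Complex.continuous_ofReal.comp
      (continuous_const.inner continuous_id))
  · fun_prop

lemma hasFDerivAt_pker (n m : ℕ) (a : ℝ) (s : EuclideanSpace ℝ (Fin n)) (w : ℂ)
    (x : EuclideanSpace ℝ (Fin n)) :
    HasFDerivAt (fun y => w * pker n m a y s)
      ((w * pker n m a x s * Complex.I) • (Complex.ofRealCLM.comp (innerSL ℝ s))) x := by
  have h1 : HasFDerivAt (fun y : EuclideanSpace ℝ (Fin n) => (inner ℝ y s : ℝ))
      (innerSL ℝ s) x := by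
    have heq : (fun y : EuclideanSpace ℝ (Fin n) => (inner ℝ y s : ℝ)) = ⇑(innerSL ℝ s) := by
      ext y; simp [mul_comm, real_inner_comm]
    rw [heq]; exact (innerSL ℝ s).hasFDerivAt
  have h2 := (Complex.ofRealCLM.hasFDerivAt (x := ((inner ℝ x s : ℝ)))).comp x h1
  have h3 := h2.const_mul Complex.I
  have h4 := h3.sub_const ((a : ℝ) * ((‖s‖ : ℝ) : ℂ) ^ (2 * m))
  have h5 := h4.cexp
  have h6 := h5.const_mul w
  refine HasFDerivAt.congr_fderiv h6 ?_
  simp only [smul_smul, pker, Function.comp_apply, Complex.ofRealCLM_apply, mul_assoc]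

lemma integrable_mul_pker (n : ℕ) {m : ℕ} (hm : 1 ≤ m) {a : ℝ} (ha : 0 < a)
    {w : EuclideanSpace ℝ (Fin n) → ℂ} (hw : Continuous w) {B : ℝ} {K : ℕ}
    (hb : ∀ s, ‖w s‖ ≤ B * (1 + ‖s‖) ^ K) (x : EuclideanSpace ℝ (Fin n)) :
    Integrable (fun s => w s * pker n m a x s) := by
  refine ((integrable_weight n hm ha K).const_mul B).mono'
    ((hw.mul (continuous_pker n m a x)).aestronglyMeasurable) (ae_of_all _ fun s => ?_)
  rw [norm_mul, norm_pker]
  calc ‖w s‖ * rexp (-(a * ‖s‖ ^ (2*m))) ≤ (B * (1+‖s‖)^K) * rexp (-(a * ‖s‖^(2*m))) :=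
        mul_le_mul_of_nonneg_right (hb s) (exp_nonneg _)
    _ = B * ((1+‖s‖)^K * rexp (-(a * ‖s‖^(2*m)))) := by ring

lemma norm_ofRealCLM_comp_le (n : ℕ) (s : EuclideanSpace ℝ (Fin n)) :
    ‖Complex.ofRealCLM.comp (innerSL ℝ s)‖ ≤ ‖s‖ := by
  refine le_trans (ContinuousLinearMap.opNorm_comp_le _ _) ?_
  rw [innerSL_apply_norm]
  have h1 : ‖Complex.ofRealCLM‖ ≤ 1 :=
    ContinuousLinearMap.opNorm_le_bound _ zero_le_one (fun x => by simp)
  calc ‖Complex.ofRealCLM‖ * ‖s‖ ≤ 1 * ‖s‖ :=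
        mul_le_mul_of_nonneg_right h1 (norm_nonneg s)
    _ = ‖s‖ := one_mul _

lemma normF'_le (n : ℕ) {m : ℕ} (a : ℝ)
    {w : EuclideanSpace ℝ (Fin n) → ℂ} {B : ℝ} {K : ℕ}
    (hb : ∀ s, ‖w s‖ ≤ B * (1 + ‖s‖) ^ K) (x s : EuclideanSpace ℝ (Fin n)) :
    ‖(w s * pker n m a x s * Complex.I) • (Complex.ofRealCLM.comp (innerSL ℝ s))‖ ≤
      B * ((1 + ‖s‖) ^ (K+1) * rexp (-(a * ‖s‖ ^ (2*m)))) := by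
  have hB0 : 0 ≤ B := by
    have := (norm_nonneg (w 0)).trans (hb 0); simpa using this
  rw [norm_smul (w s * pker n m a x s * Complex.I) (Complex.ofRealCLM.comp (innerSL ℝ s)),
    norm_mul, norm_mul, Complex.norm_I, mul_one, norm_pker]
  calc ‖w s‖ * rexp (-(a * ‖s‖^(2*m))) * ‖Complex.ofRealCLM.comp (innerSL ℝ s)‖
      ≤ (B * (1+‖s‖)^K) * rexp (-(a * ‖s‖^(2*m))) * ‖s‖ := by
        gcongr
        · exact hb s
        · exact norm_ofRealCLM_comp_le n s
    _ ≤ (B * (1+‖s‖)^K) * rexp (-(a * ‖s‖^(2*m))) * (1 + ‖s‖) := by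
        gcongr
        linarith [norm_nonneg s]
    _ = B * ((1 + ‖s‖)^(K+1) * rexp (-(a * ‖s‖^(2*m)))) := by rw [pow_succ]; ring

lemma integrable_F' (n : ℕ) {m : ℕ} (hm : 1 ≤ m) {a : ℝ} (ha : 0 < a)
    {w : EuclideanSpace ℝ (Fin n) → ℂ} (hw : Continuous w) {B : ℝ} {K : ℕ}
    (hb : ∀ s, ‖w s‖ ≤ B * (1 + ‖s‖) ^ K) (x : EuclideanSpace ℝ (Fin n)) :
    Integrable (fun s : EuclideanSpace ℝ (Fin n) =>
      (w s * pker n m a x s * Complex.I) • (Complex.ofRealCLM.comp (innerSL ℝ s))) := by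
  refine ((integrable_weight n hm ha (K+1)).const_mul B).mono' ?_
    (ae_of_all _ fun s => normF'_le n a hb x s)
  exact (((hw.mul (continuous_pker n m a x)).mul continuous_const).smul
    ((innerSL ℝ).continuous.const_clm_comp Complex.ofRealCLM)).aestronglyMeasurable

lemma hasFDerivAt_integral (n : ℕ) {m : ℕ} (hm : 1 ≤ m) {a : ℝ} (ha : 0 < a)
    {w : EuclideanSpace ℝ (Fin n) → ℂ} (hw : Continuous w) {B : ℝ} {K : ℕ}
    (hb : ∀ s, ‖w s‖ ≤ B * (1 + ‖s‖) ^ K) (x : EuclideanSpace ℝ (Fin n)) :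
    HasFDerivAt (fun y => ∫ s, w s * pker n m a y s)
      (∫ s, (w s * pker n m a x s * Complex.I) • (Complex.ofRealCLM.comp (innerSL ℝ s))) x := by
  apply hasFDerivAt_integral_of_dominated_of_fderiv_le (Metric.ball_mem_nhds x one_pos)
    (F' := fun y s => (w s * pker n m a y s * Complex.I) • (Complex.ofRealCLM.comp (innerSL ℝ s)))
    (bound := fun s => B * ((1 + ‖s‖) ^ (K+1) * rexp (-(a * ‖s‖ ^ (2*m)))))
  · exact Eventually.of_forall fun y =>
      ((hw.mul (continuous_pker n m a y)).aestronglyMeasurable)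
  · exact integrable_mul_pker n hm ha hw hb x
  · exact (integrable_F' n hm ha hw hb x).aestronglyMeasurable
  · exact ae_of_all _ fun s y _ => normF'_le n a hb y s
  · exact (integrable_weight n hm ha (K+1)).const_mul B
  · exact ae_of_all _ fun s y _ => hasFDerivAt_pker n m a s (w s) y

lemma fderiv_integral_apply (n : ℕ) {m : ℕ} (hm : 1 ≤ m) {a : ℝ} (ha : 0 < a)
    {w : EuclideanSpace ℝ (Fin n) → ℂ} (hw : Continuous w) {B : ℝ} {K : ℕ}
    (hb : ∀ s, ‖w s‖ ≤ B * (1 + ‖s‖) ^ K) (x : EuclideanSpace ℝ (Fin n)) (i : Fin n) :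
    fderiv ℝ (fun y => ∫ s, w s * pker n m a y s) x (EuclideanSpace.single i 1)
      = ∫ s, (Complex.I * (s i)) * w s * pker n m a x s := by
  rw [(hasFDerivAt_integral n hm ha hw hb x).fderiv,
    ContinuousLinearMap.integral_apply (integrable_F' n hm ha hw hb x)]
  congr 1
  ext s
  rw [ContinuousLinearMap.smul_apply, ContinuousLinearMap.comp_apply]
  have : (innerSL ℝ s) (EuclideanSpace.single i 1) = s i := by
    simp [EuclideanSpace.inner_single_right]
  rw [this]
  simp only [Complex.ofRealCLM_apply, smul_eq_mul]
  ring

lemma abs_coord_le_norm {n : ℕ} (s : EuclideanSpace ℝ (Fin n)) (i : Fin n) :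
    |s i| ≤ ‖s‖ := by
  have h := abs_real_inner_le_norm s (EuclideanSpace.single i (1:ℝ))
  simpa [EuclideanSpace.inner_single_right, EuclideanSpace.norm_single] using h

lemma laplacian_integral (n : ℕ) {m : ℕ} (hm : 1 ≤ m) {a : ℝ} (ha : 0 < a)
    {w : EuclideanSpace ℝ (Fin n) → ℂ} (hw : Continuous w) {B : ℝ} {K : ℕ}
    (hb : ∀ s, ‖w s‖ ≤ B * (1 + ‖s‖) ^ K) (x : EuclideanSpace ℝ (Fin n)) :
    euclLaplacian (fun y => ∫ s, w s * pker n m a y s) x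
      = ∫ s, (-((‖s‖ : ℝ) : ℂ) ^ 2) * w s * pker n m a x s := by
  have hB0 : 0 ≤ B := by
    have := (norm_nonneg (w 0)).trans (hb 0); simpa using this
  have hcoord : ∀ i : Fin n, Continuous (fun s : EuclideanSpace ℝ (Fin n) => s i) :=
    fun i => (EuclideanSpace.proj (𝕜 := ℝ) i).continuous
  -- first derivative weights
  set wi : Fin n → EuclideanSpace ℝ (Fin n) → ℂ :=
    fun i s => Complex.I * (s i) * w s with hwi_def
  have hwi_cont : ∀ i, Continuous (wi i) := fun i =>
    (continuous_const.mul ((Complex.continuous_ofReal.comp (hcoord i)))).mul hw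
  have hwi_bound : ∀ i, ∀ s, ‖wi i s‖ ≤ B * (1 + ‖s‖) ^ (K+1) := by
    intro i s
    rw [hwi_def]
    simp only [norm_mul, Complex.norm_I, one_mul, Complex.norm_real]
    calc ‖s i‖ * ‖w s‖ ≤ ‖s‖ * (B * (1+‖s‖)^K) :=
          mul_le_mul (abs_coord_le_norm s i) (hb s) (norm_nonneg _) (norm_nonneg _)
      _ ≤ (1+‖s‖) * (B * (1+‖s‖)^K) := by
          have := norm_nonneg s
          gcongr; linarith
      _ = B * (1 + ‖s‖)^(K+1) := by rw [pow_succ]; ring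
  have hwi2_bound : ∀ i, ∀ s,
      ‖Complex.I * (s i) * wi i s‖ ≤ B * (1 + ‖s‖) ^ (K+2) := by
    intro i s
    simp only [norm_mul, Complex.norm_I, one_mul, Complex.norm_real]
    calc ‖s i‖ * ‖wi i s‖ ≤ ‖s‖ * (B * (1+‖s‖)^(K+1)) :=
          mul_le_mul (abs_coord_le_norm s i) (hwi_bound i s) (norm_nonneg _) (norm_nonneg _)
      _ ≤ (1+‖s‖) * (B * (1+‖s‖)^(K+1)) := by
          have := norm_nonneg s
          gcongr; linarith
      _ = B * (1 + ‖s‖)^(K+2) := by rw [pow_succ]; ring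
  have hstep : ∀ i : Fin n,
      fderiv ℝ (fun y => fderiv ℝ (fun z => ∫ s, w s * pker n m a z s) y
          (EuclideanSpace.single i 1)) x (EuclideanSpace.single i 1)
        = ∫ s, (Complex.I * (s i)) * wi i s * pker n m a x s := by
    intro i
    have h1 : (fun y => fderiv ℝ (fun z => ∫ s, w s * pker n m a z s) y
        (EuclideanSpace.single i 1)) = fun y => ∫ s, wi i s * pker n m a y s := by
      funext y
      exact fderiv_integral_apply n hm ha hw hb y i
    rw [h1]
    exact fderiv_integral_apply n hm ha (hwi_cont i) (hwi_bound i) x i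
  rw [euclLaplacian]
  simp only [hstep]
  rw [← integral_finset_sum _ (fun i _ =>
    integrable_mul_pker n hm ha (w := fun s => (Complex.I * (s i)) * wi i s)
      ((continuous_const.mul ((Complex.continuous_ofReal.comp (hcoord i)))).mul (hwi_cont i))
      (hwi2_bound i) x)]
  congr 1
  funext s
  have hnorm : (‖s‖ : ℝ)^2 = ∑ i, (s i)^2 := by
    rw [EuclideanSpace.norm_eq, Real.sq_sqrt (by positivity)]
    congr 1; funext i; exact sq_abs _
  calc ∑ i, (Complex.I * (s i)) * wi i s * pker n m a x s
      = (∑ i, -((s i : ℂ))^2) * (w s * pker n m a x s) := by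
        rw [Finset.sum_mul]
        refine Finset.sum_congr rfl fun i _ => ?_
        rw [hwi_def]
        simp only []
        have : Complex.I * Complex.I = -1 := Complex.I_mul_I
        ring_nf
        rw [Complex.I_sq]
        ring
    _ = (-((‖s‖ : ℝ) : ℂ) ^ 2) * w s * pker n m a x s := by
        have hsum : (∑ i, -((s i : ℂ))^2) = -(((‖s‖ : ℝ) : ℂ))^2 := by
          have h1 : (∑ i, -((s i : ℂ))^2) = -(∑ i, ((s i : ℂ))^2) := by
            simp
          rw [h1]
          have h2 : (∑ i, ((s i : ℂ))^2) = (((∑ i, (s i)^2 : ℝ)) : ℂ) := by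
            push_cast; rfl
          rw [h2, ← hnorm]
          push_cast; ring
        rw [hsum]; ring

noncomputable def wk (n : ℕ) (k : ℕ) (s : EuclideanSpace ℝ (Fin n)) : ℂ :=
  ((((2 * Real.pi) ^ n : ℝ)⁻¹ : ℝ) : ℂ) * (-((‖s‖ : ℝ) : ℂ) ^ 2) ^ k

lemma wk_cont (n k : ℕ) : Continuous (wk n k) := by
  unfold wk; fun_prop

lemma wk_bound (n k : ℕ) (s : EuclideanSpace ℝ (Fin n)) :
    ‖wk n k s‖ ≤ |((2 * Real.pi) ^ n : ℝ)⁻¹| * (1 + ‖s‖) ^ (2 * k) := by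
  unfold wk
  rw [norm_mul, norm_pow, norm_neg, norm_pow, Complex.norm_real, Complex.norm_real,
    Real.norm_eq_abs, Real.norm_eq_abs, _root_.abs_of_nonneg (norm_nonneg s)]
  have h1 : (‖s‖^2)^k ≤ (1 + ‖s‖)^(2*k) := by
    rw [pow_mul]
    exact pow_le_pow_left₀ (by positivity) (by nlinarith [norm_nonneg s]) k
  calc |((2 * Real.pi) ^ n : ℝ)⁻¹| * (‖s‖^2)^k
      ≤ |((2 * Real.pi) ^ n : ℝ)⁻¹| * (1 + ‖s‖)^(2*k) := by
        gcongr
    _ = _ := rfl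

lemma iterated_laplacian (n : ℕ) {m : ℕ} (hm : 1 ≤ m) {a : ℝ} (ha : 0 < a) (k : ℕ) :
    euclLaplacian^[k] (heatKernel n m a) = fun x => ∫ s, wk n k s * pker n m a x s := by
  induction k with
  | zero =>
    funext x
    simp only [Function.iterate_zero, id_eq]
    show (((2 * Real.pi) ^ n : ℝ)⁻¹ : ℝ) • (∫ s, pker n m a x s) = _
    rw [← integral_smul]
    congr 1; funext s
    rw [wk]
    simp only [pow_zero, mul_one, Complex.real_smul]
  | succ k ih =>
    funext x
    rw [Function.iterate_succ_apply', ih]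
    rw [laplacian_integral n hm ha (wk_cont n k) (wk_bound n k) x]
    congr 1; funext s
    rw [wk, wk, pow_succ]
    ring

theorem heatKernel_solves_heat (n m : ℕ) (hn : 1 ≤ n) (hm : 1 ≤ m) :
    ∀ a : ℝ, 0 < a → ∀ x : EuclideanSpace ℝ (Fin n),
      HasDerivAt (fun b : ℝ => heatKernel n m b x)
        (-((-1 : ℂ) ^ m * (euclLaplacian^[m] (heatKernel n m a)) x)) a := by
  intro a ha x
  have ha2 : (0:ℝ) < a/2 := by positivity
  have hFint : Integrable (fun s => pker n m a x s) := by
    have h := integrable_mul_pker n hm ha (w := fun _ => (1:ℂ)) continuous_const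
      (B := 1) (K := 0) (fun s => by simp) x
    simpa using h
  have hbound : ∀ (s : EuclideanSpace ℝ (Fin n)), ∀ b ∈ Metric.ball a (a/2),
      ‖(-((‖s‖ : ℝ) : ℂ) ^ (2*m)) * pker n m b x s‖ ≤
        (1+‖s‖)^(2*m) * rexp (-(a/2 * ‖s‖^(2*m))) := by
    intro s b hb
    have hb' : a/2 < b := by
      rw [Metric.mem_ball, Real.dist_eq, abs_lt] at hb
      linarith
    rw [norm_mul, norm_neg, norm_pow, Complex.norm_real, Real.norm_eq_abs,
      _root_.abs_of_nonneg (norm_nonneg s), norm_pker]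
    have h1 : rexp (-(b * ‖s‖^(2*m))) ≤ rexp (-(a/2 * ‖s‖^(2*m))) := by
      rw [Real.exp_le_exp]
      have := pow_nonneg (norm_nonneg s) (2*m)
      nlinarith
    have h2 : ‖s‖^(2*m) ≤ (1+‖s‖)^(2*m) :=
      pow_le_pow_left₀ (norm_nonneg s) (by linarith [norm_nonneg s]) (2*m)
    exact mul_le_mul h2 h1 (exp_nonneg _) (by positivity)
  have hdiff : ∀ (s : EuclideanSpace ℝ (Fin n)), ∀ b ∈ Metric.ball a (a/2),
      HasDerivAt (fun b' : ℝ => pker n m b' x s)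
        ((-((‖s‖ : ℝ) : ℂ) ^ (2*m)) * pker n m b x s) b := by
    intro s b _
    have h0 : HasDerivAt (fun b : ℝ => ((b : ℝ) : ℂ)) 1 b := by
      simpa using (hasDerivAt_id b).ofReal_comp
    have h1 := (h0.mul_const (((‖s‖ : ℝ) : ℂ) ^ (2*m))).const_sub
      (Complex.I * ((inner ℝ x s : ℝ) : ℂ))
    have h2 := h1.cexp
    have h3 : (fun b' : ℝ => pker n m b' x s)
        = fun b' : ℝ => Complex.exp (Complex.I * ((inner ℝ x s : ℝ) : ℂ)
            - ((b' : ℝ) : ℂ) * ((‖s‖ : ℝ) : ℂ) ^ (2*m)) := by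
      funext b'; rw [pker]
    rw [h3]
    convert h2 using 1
    rw [pker]; ring
  have key := hasDerivAt_integral_of_dominated_loc_of_deriv_le (μ := volume)
    (F := fun (b : ℝ) (s : EuclideanSpace ℝ (Fin n)) => pker n m b x s)
    (F' := fun (b : ℝ) (s : EuclideanSpace ℝ (Fin n)) =>
      (-((‖s‖ : ℝ) : ℂ) ^ (2*m)) * pker n m b x s)
    (bound := fun s => (1+‖s‖)^(2*m) * rexp (-(a/2 * ‖s‖^(2*m))))
    (Metric.ball_mem_nhds a ha2)
    (Eventually.of_forall fun b => (continuous_pker n m b x).aestronglyMeasurable)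
    hFint
    ((((Complex.continuous_ofReal.comp continuous_norm).pow (2*m)).neg.mul
      (continuous_pker n m a x)).aestronglyMeasurable)
    (ae_of_all _ hbound)
    (integrable_weight n hm ha2 (2*m))
    (ae_of_all _ hdiff)
  have hd2 : HasDerivAt (fun b : ℝ => ((2 * Real.pi) ^ n : ℝ)⁻¹ • ∫ s, pker n m b x s) _ a :=
    key.2.const_smul (((2 * Real.pi) ^ n : ℝ)⁻¹ : ℝ)
  have hfun : (fun b : ℝ => ((2 * Real.pi) ^ n : ℝ)⁻¹ • ∫ s, pker n m b x s)
      = fun b : ℝ => heatKernel n m b x := rfl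
  rw [hfun] at hd2
  convert hd2 using 1
  rw [iterated_laplacian n hm ha m, ← integral_smul]
  have h1 : -((-1 : ℂ) ^ m * ∫ s, wk n m s * pker n m a x s)
      = ∫ s, -((-1 : ℂ) ^ m * (wk n m s * pker n m a x s)) := by
    rw [← smul_eq_mul, ← integral_smul, ← integral_neg]
    simp only [smul_eq_mul]
  rw [h1]
  congr 1; funext s
  rw [wk, Complex.real_smul]
  have h2 : ((-1 : ℂ)) ^ m * (-((‖s‖ : ℝ) : ℂ) ^ 2) ^ m = ((‖s‖ : ℝ) : ℂ) ^ (2*m) := by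
    rw [← mul_pow, neg_one_mul, neg_neg, ← pow_mul]
  show -((-1 : ℂ)^m * (((((2*Real.pi)^n : ℝ)⁻¹ : ℝ) : ℂ)
        * (-((‖s‖ : ℝ) : ℂ)^2)^m * pker n m a x s))
      = ((((2*Real.pi)^n : ℝ)⁻¹ : ℝ) : ℂ)
        * ((-((‖s‖ : ℝ) : ℂ)^(2*m)) * pker n m a x s)
  linear_combination (-(((((2*Real.pi)^n : ℝ)⁻¹ : ℝ) : ℂ) * pker n m a x s)) * h2
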